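/- A map σ : G → G is an automorphism of G = ES_1(p,n) if and only if there exist matrices A,B,C,D ∈ M_n(𝔽_p) with M = [[A,C],[D,B]] ∈ GL_{2n}(𝔽_p) satisfying MᵗΔM = lΔ for some l ∈ 𝔽_p^* (l ≠ 0), together with linear functionals α, β : 𝔽_p^n → 𝔽_p, such that for all (u,w,z) ∈ G: σ(u,w,z) = (Au+Cw, Du+Bw, α(u)+β(w)+lz+(1/2)uᵗ(AᵗD)u+(1/2)wᵗ(CᵗB)w+wᵗ(CᵗD)u). -/

import Mathlib

open Matrix

/-- The Heisenberg group `ES₁(p,n)`: carrier `𝔽_p^n × 𝔽_p^n × 𝔽_p`. -/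
@[ext]
structure ES1 (p n : ℕ) : Type where
  u : Fin n → ZMod p
  w : Fin n → ZMod p
  z : ZMod p

namespace ES1

variable {p n : ℕ}

instance : Mul (ES1 p n) :=
  ⟨fun x y => ⟨x.u + y.u, x.w + y.w, x.z + y.z + x.u ⬝ᵥ y.w⟩⟩

@[simp] theorem mul_u (x y : ES1 p n) : (x * y).u = x.u + y.u := rfl
@[simp] theorem mul_w (x y : ES1 p n) : (x * y).w = x.w + y.w := rfl
@[simp] theorem mul_z (x y : ES1 p n) : (x * y).z = x.z + y.z + x.u ⬝ᵥ y.w := rfl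

instance : One (ES1 p n) := ⟨⟨0, 0, 0⟩⟩

@[simp] theorem one_u : (1 : ES1 p n).u = 0 := rfl
@[simp] theorem one_w : (1 : ES1 p n).w = 0 := rfl
@[simp] theorem one_z : (1 : ES1 p n).z = 0 := rfl

instance : Inv (ES1 p n) :=
  ⟨fun x => ⟨-x.u, -x.w, -x.z + x.u ⬝ᵥ x.w⟩⟩

@[simp] theorem inv_u (x : ES1 p n) : (x⁻¹).u = -x.u := rfl
@[simp] theorem inv_w (x : ES1 p n) : (x⁻¹).w = -x.w := rfl
@[simp] theorem inv_z (x : ES1 p n) : (x⁻¹).z = -x.z + x.u ⬝ᵥ x.w := rfl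

instance : Group (ES1 p n) :=
  Group.ofLeftAxioms
    (fun a b c => by
      ext <;> simp [add_dotProduct, dotProduct_add] <;> ring)
    (fun a => by ext <;> simp)
    (fun a => by ext <;> simp [neg_dotProduct] <;> ring)

end ES1

/-- The standard symplectic matrix `Δ = [[0, Iₙ], [-Iₙ, 0]]`. -/
def Delta (p n : ℕ) : Matrix (Fin n ⊕ Fin n) (Fin n ⊕ Fin n) (ZMod p) :=
  Matrix.fromBlocks 0 1 (-1) 0

variable {R : Type*} [CommRing R] {n : ℕ}

lemma dp_swap {m k : Type*} [Fintype m] [Fintype k] (M : Matrix m k R)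
    (x : m → R) (y : k → R) : x ⬝ᵥ (M *ᵥ y) = y ⬝ᵥ (Mᵀ *ᵥ x) := by
  rw [mulVec_transpose, dotProduct_mulVec, dotProduct_comm]

lemma dpm {m k l : Type*} [Fintype m] [Fintype k] [Fintype l]
    (M : Matrix m k R) (N : Matrix m l R) (x : k → R) (y : l → R) :
    (M *ᵥ x) ⬝ᵥ (N *ᵥ y) = x ⬝ᵥ ((Mᵀ * N) *ᵥ y) := by
  rw [← Matrix.mulVec_mulVec, dp_swap Mᵀ, transpose_transpose, dotProduct_comm]

lemma bilin_ext {M N : Matrix (Fin n) (Fin n) R}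
    (h : ∀ x y, x ⬝ᵥ (M *ᵥ y) = x ⬝ᵥ (N *ᵥ y)) : M = N := by
  ext i j
  have := h (Pi.single i 1) (Pi.single j 1)
  simpa [Matrix.mulVec_single, single_dotProduct] using this

lemma symplectic_iff (p : ℕ) (A B C D : Matrix (Fin n) (Fin n) (ZMod p)) (l : ZMod p) :
    (Matrix.fromBlocks A C D B)ᵀ * Delta p n * Matrix.fromBlocks A C D B = l • Delta p n ↔
      (Aᵀ * D = Dᵀ * A ∧ Cᵀ * B = Bᵀ * C ∧ Aᵀ * B - Dᵀ * C = l • 1) := by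
  rw [Delta, fromBlocks_transpose, fromBlocks_multiply, fromBlocks_multiply,
    fromBlocks_smul, fromBlocks_inj]
  simp only [mul_zero, mul_one, mul_neg, neg_mul, add_zero, zero_add, smul_zero, smul_neg]
  constructor
  · rintro ⟨h1, h2, h3, h4⟩
    rw [neg_add_eq_zero] at h1
    rw [neg_add_eq_sub] at h2
    rw [neg_add_eq_zero] at h4
    exact ⟨h1.symm, h4.symm, h2⟩
  · rintro ⟨h1, h2, h3⟩
    have h3' : Bᵀ * A - Cᵀ * D = l • 1 := by
      have := congrArg Matrix.transpose h3
      simpa [transpose_sub, transpose_mul, transpose_smul] using this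
    refine ⟨?_, ?_, ?_, ?_⟩
    · rw [neg_add_eq_zero]; exact h1.symm
    · rw [neg_add_eq_sub]; exact h3
    · rw [neg_add_eq_sub, ← neg_sub, h3']
    · rw [neg_add_eq_zero]; exact h2.symm


theorem ES1_automorphism_iff (p n : ℕ) [Fact p.Prime] (hodd : Odd p) (hn : 0 < n)
    (σ : ES1 p n → ES1 p n) :
    ((∀ x y : ES1 p n, σ (x * y) = σ x * σ y) ∧ Function.Bijective σ) ↔
      ∃ (A B C D : Matrix (Fin n) (Fin n) (ZMod p)) (l : ZMod p)
        (α β : (Fin n → ZMod p) →ₗ[ZMod p] ZMod p),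
        IsUnit (Matrix.fromBlocks A C D B) ∧ l ≠ 0 ∧
        (Matrix.fromBlocks A C D B)ᵀ * Delta p n * Matrix.fromBlocks A C D B
            = l • Delta p n ∧
        ∀ x : ES1 p n,
          σ x = ⟨A *ᵥ x.u + C *ᵥ x.w, D *ᵥ x.u + B *ᵥ x.w,
            α x.u + β x.w + l * x.z
              + (2 : ZMod p)⁻¹ * (x.u ⬝ᵥ ((Aᵀ * D) *ᵥ x.u))
              + (2 : ZMod p)⁻¹ * (x.w ⬝ᵥ ((Cᵀ * B) *ᵥ x.w))
              + x.w ⬝ᵥ ((Cᵀ * D) *ᵥ x.u)⟩ := by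

  constructor
  · rintro ⟨hhom, hinj, hsurj⟩
    have hinv2 : (2 : ZMod p)⁻¹ * 2 = 1 := by
      apply inv_mul_cancel₀
      have hp2 : p ≠ 2 := by rintro rfl; simp [Nat.odd_iff] at hodd
      intro h
      have h' : ((2 : ℕ) : ZMod p) = 0 := by exact_mod_cast h
      rw [ZMod.natCast_eq_zero_iff] at h'
      exact hp2 ((Nat.prime_dvd_prime_iff_eq (Fact.out) Nat.prime_two).1 h')
    have hσ1 : σ 1 = 1 := by
      have h := hhom 1 1
      rw [one_mul] at h
      exact (mul_left_cancel (a := σ 1) (by rw [mul_one, ← h])).symm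
    -- center is preserved
    have hcen : ∀ z : ZMod p, (σ ⟨0, 0, z⟩).u = 0 ∧ (σ ⟨0, 0, z⟩).w = 0 := by
      intro z
      have hcomm : ∀ y : ES1 p n, σ ⟨0, 0, z⟩ * y = y * σ ⟨0, 0, z⟩ := by
        intro y
        obtain ⟨x, rfl⟩ := hsurj y
        rw [← hhom, ← hhom]
        congr 1
        ext <;> simp <;> ring
      constructor
      · funext i
        have h := congrArg ES1.z (hcomm ⟨0, Pi.single i 1, 0⟩)
        simpa [dotProduct_single, zero_dotProduct] using h
      · funext i
        have h := congrArg ES1.z (hcomm ⟨Pi.single i 1, 0, 0⟩)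
        have h' : (σ ⟨0,0,z⟩).w i = 0 := by
          simpa [single_dotProduct, dotProduct_zero] using h.symm
        exact h'
    set l := (σ ⟨0, 0, 1⟩).z with hldef
    have hadd0 : ∀ a b : ZMod p, (σ ⟨0,0,a+b⟩).z = (σ ⟨0,0,a⟩).z + (σ ⟨0,0,b⟩).z := by
      intro a b
      have hm : (⟨0,0,a⟩ : ES1 p n) * ⟨0,0,b⟩ = ⟨0,0,a+b⟩ := by ext <;> simp
      rw [← hm, hhom]
      simp [(hcen a).1]
    have hzmap : ∀ z : ZMod p, σ ⟨0, 0, z⟩ = ⟨0, 0, l * z⟩ := by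
      have hfm : ∀ z : ZMod p, (σ ⟨0,0,z⟩).z = l * z := by
        let fm : ZMod p →+ ZMod p :=
          AddMonoidHom.mk' (fun z => (σ ⟨0,0,z⟩).z) hadd0
        intro z
        have h := map_smul (fm.toZModLinearMap p) z (1 : ZMod p)
        simp only [smul_eq_mul, mul_one] at h
        exact h.trans (mul_comm _ _)
      intro z
      exact ES1.ext (hcen z).1 (hcen z).2 (hfm z)
    have hl : l ≠ 0 := by
      intro h0
      have h1 : σ ⟨0,0,1⟩ = σ 1 := by
        rw [hzmap, hσ1, h0]
        congr 1
        simp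
      have := congrArg ES1.z (hinj h1)
      simp at this
    -- z-decomposition
    have hdec : ∀ a : ES1 p n, σ a = σ ⟨a.u, a.w, 0⟩ * ⟨0, 0, l * a.z⟩ := by
      intro a
      have h1 : a = (⟨a.u, a.w, 0⟩ : ES1 p n) * ⟨0, 0, a.z⟩ := by ext <;> simp
      conv_lhs => rw [h1]
      rw [hhom, hzmap]
    have hU : ∀ a : ES1 p n, (σ a).u = (σ ⟨a.u, a.w, 0⟩).u := by
      intro a; rw [hdec a]; simp
    have hW : ∀ a : ES1 p n, (σ a).w = (σ ⟨a.u, a.w, 0⟩).w := by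
      intro a; rw [hdec a]; simp
    have hZ : ∀ a : ES1 p n, (σ a).z = (σ ⟨a.u, a.w, 0⟩).z + l * a.z := by
      intro a; rw [hdec a]; simp
    -- additivity of the (u,w)-part
    have hUadd : ∀ u1 w1 u2 w2 : Fin n → ZMod p,
        (σ ⟨u1+u2, w1+w2, 0⟩).u = (σ ⟨u1,w1,0⟩).u + (σ ⟨u2,w2,0⟩).u ∧
        (σ ⟨u1+u2, w1+w2, 0⟩).w = (σ ⟨u1,w1,0⟩).w + (σ ⟨u2,w2,0⟩).w := by
      intro u1 w1 u2 w2
      have hm : (⟨u1,w1,0⟩ : ES1 p n) * ⟨u2,w2,0⟩ = ⟨u1+u2, w1+w2, u1 ⬝ᵥ w2⟩ := by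
        ext <;> simp
      have h := hhom ⟨u1,w1,0⟩ ⟨u2,w2,0⟩
      rw [hm] at h
      constructor
      · have h1 := congrArg ES1.u h
        rw [hU ⟨u1+u2, w1+w2, u1 ⬝ᵥ w2⟩] at h1
        simpa using h1
      · have h1 := congrArg ES1.w h
        rw [hW ⟨u1+u2, w1+w2, u1 ⬝ᵥ w2⟩] at h1
        simpa using h1
    -- the linear part as a matrix
    set T : ((Fin n ⊕ Fin n) → ZMod p) →+ ((Fin n ⊕ Fin n) → ZMod p) :=
      AddMonoidHom.mk'
        (fun v =>
          Sum.elim (σ ⟨v ∘ Sum.inl, v ∘ Sum.inr, 0⟩).u (σ ⟨v ∘ Sum.inl, v ∘ Sum.inr, 0⟩).w)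
        (by
          intro v1 v2
          obtain ⟨hu, hw⟩ := hUadd (v1 ∘ Sum.inl) (v1 ∘ Sum.inr) (v2 ∘ Sum.inl) (v2 ∘ Sum.inr)
          have e1 : (v1+v2) ∘ Sum.inl = v1 ∘ Sum.inl + v2 ∘ Sum.inl := rfl
          have e2 : (v1+v2) ∘ Sum.inr = v1 ∘ Sum.inr + v2 ∘ Sum.inr := rfl
          funext i
          cases i with
          | inl i => simp only [Pi.add_apply, Sum.elim_inl, e1, e2, hu]
          | inr i => simp only [Pi.add_apply, Sum.elim_inr, e1, e2, hw]) with hTdef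
    set Mf := LinearMap.toMatrix' (T.toZModLinearMap p) with hMfdef
    set A := Mf.toBlocks₁₁ with hA
    set C := Mf.toBlocks₁₂ with hC
    set D := Mf.toBlocks₂₁ with hD
    set B := Mf.toBlocks₂₂ with hB
    have hMf : Matrix.fromBlocks A C D B = Mf := Matrix.fromBlocks_toBlocks Mf
    have hmul : ∀ v, Mf *ᵥ v = T v := by
      intro v
      rw [hMfdef, ← Matrix.toLin'_apply, Matrix.toLin'_toMatrix']
      rfl
    have haction : ∀ u w : Fin n → ZMod p,
        A *ᵥ u + C *ᵥ w = (σ ⟨u, w, 0⟩).u ∧ D *ᵥ u + B *ᵥ w = (σ ⟨u, w, 0⟩).w := by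
      intro u w
      have h := hmul (Sum.elim u w)
      rw [← hMf, fromBlocks_mulVec] at h
      simp only [Sum.elim_comp_inl, Sum.elim_comp_inr] at h
      constructor
      · funext i
        have := congrFun h (Sum.inl i)
        simpa [hTdef] using this
      · funext i
        have := congrFun h (Sum.inr i)
        simpa [hTdef] using this
    have hMunit : IsUnit Mf := by
      rw [← Matrix.mulVec_injective_iff_isUnit]
      have hT : Mf.mulVec = ⇑T := funext hmul
      rw [hT]
      rw [injective_iff_map_eq_zero]
      intro v hv
      have hu0 : (σ ⟨v ∘ Sum.inl, v ∘ Sum.inr, 0⟩).u = 0 := by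
        funext i
        have := congrFun hv (Sum.inl i)
        simpa [hTdef] using this
      have hw0 : (σ ⟨v ∘ Sum.inl, v ∘ Sum.inr, 0⟩).w = 0 := by
        funext i
        have := congrFun hv (Sum.inr i)
        simpa [hTdef] using this
      set c := (σ ⟨v ∘ Sum.inl, v ∘ Sum.inr, 0⟩).z with hc
      have h1 : σ ⟨v ∘ Sum.inl, v ∘ Sum.inr, 0⟩ = σ ⟨0, 0, l⁻¹ * c⟩ := by
        rw [hzmap]
        refine ES1.ext hu0 hw0 ?_
        rw [← mul_assoc, mul_inv_cancel₀ hl, one_mul]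
      have h2 := hinj h1
      have hvl : v ∘ Sum.inl = 0 := by simpa using congrArg ES1.u h2
      have hvr : v ∘ Sum.inr = 0 := by simpa using congrArg ES1.w h2
      funext i
      cases i with
      | inl i => exact congrFun hvl i
      | inr i => exact congrFun hvr i
    -- the key quadratic identity
    set φ : (Fin n → ZMod p) → (Fin n → ZMod p) → ZMod p :=
      fun u w => (σ ⟨u, w, 0⟩).z with hφ
    have hkey : ∀ u1 w1 u2 w2 : Fin n → ZMod p,
        φ (u1+u2) (w1+w2) + l * (u1 ⬝ᵥ w2) =
          φ u1 w1 + φ u2 w2 + (A *ᵥ u1 + C *ᵥ w1) ⬝ᵥ (D *ᵥ u2 + B *ᵥ w2) := by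
      intro u1 w1 u2 w2
      have hm : (⟨u1,w1,0⟩ : ES1 p n) * ⟨u2,w2,0⟩ = ⟨u1+u2, w1+w2, u1 ⬝ᵥ w2⟩ := by
        ext <;> simp
      have h := congrArg ES1.z (hhom ⟨u1,w1,0⟩ ⟨u2,w2,0⟩)
      rw [hm, hZ ⟨u1+u2, w1+w2, u1 ⬝ᵥ w2⟩] at h
      simp only [ES1.mul_z] at h
      rw [← (haction u1 w1).1, ← (haction u2 w2).2] at h
      simpa [hφ] using h
    -- symmetry relations
    have r1v : ∀ x y : Fin n → ZMod p,
        (A *ᵥ x) ⬝ᵥ (D *ᵥ y) = (A *ᵥ y) ⬝ᵥ (D *ᵥ x) := by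
      intro x y
      have k1 := hkey x 0 y 0
      have k2 := hkey y 0 x 0
      simp only [Matrix.mulVec_zero, add_zero, dotProduct_zero, zero_add, mul_zero] at k1 k2
      rw [add_comm y x] at k2
      linear_combination k2 - k1
    have r3v : ∀ x y : Fin n → ZMod p,
        (C *ᵥ x) ⬝ᵥ (B *ᵥ y) = (C *ᵥ y) ⬝ᵥ (B *ᵥ x) := by
      intro x y
      have k1 := hkey 0 x 0 y
      have k2 := hkey 0 y 0 x
      simp only [Matrix.mulVec_zero, add_zero, dotProduct_zero, zero_add,
        dotProduct_zero, zero_dotProduct, mul_zero] at k1 k2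
      rw [add_comm y x] at k2
      linear_combination k2 - k1
    have r2v : ∀ x y : Fin n → ZMod p,
        φ x y + l * (x ⬝ᵥ y) = φ x 0 + φ 0 y + (A *ᵥ x) ⬝ᵥ (B *ᵥ y) := by
      intro x y
      have k := hkey x 0 0 y
      simpa using k
    have r4v : ∀ x y : Fin n → ZMod p,
        φ x y = φ 0 y + φ x 0 + (C *ᵥ y) ⬝ᵥ (D *ᵥ x) := by
      intro x y
      have k := hkey 0 y x 0
      simpa using k
    have R1 : Aᵀ * D = Dᵀ * A := by
      apply bilin_ext
      intro x y
      linear_combination - dpm A D x y + r1v x y + dotProduct_comm (A *ᵥ y) (D *ᵥ x)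
        + dpm D A x y
    have R3 : Cᵀ * B = Bᵀ * C := by
      apply bilin_ext
      intro x y
      linear_combination - dpm C B x y + r3v x y + dotProduct_comm (C *ᵥ y) (B *ᵥ x)
        + dpm B C x y
    have R2 : Aᵀ * B - Dᵀ * C = l • 1 := by
      have hAB : Aᵀ * B = Dᵀ * C + l • 1 := by
        apply bilin_ext
        intro x y
        rw [add_mulVec, dotProduct_add, smul_mulVec, one_mulVec,
          dotProduct_smul, smul_eq_mul]
        have k1 := r2v x y
        have k2 := r4v x y
        linear_combination k2 - k1 - dpm A B x y + dpm D C x y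
          + dotProduct_comm (C *ᵥ y) (D *ᵥ x)
      rw [hAB]; exact add_sub_cancel_left _ _
    -- the linear functionals
    have hsymAD : ∀ x y : Fin n → ZMod p,
        y ⬝ᵥ ((Aᵀ * D) *ᵥ x) = x ⬝ᵥ ((Aᵀ * D) *ᵥ y) := by
      intro x y; rw [dp_swap, transpose_mul, transpose_transpose, ← R1]
    have hsymCB : ∀ x y : Fin n → ZMod p,
        y ⬝ᵥ ((Cᵀ * B) *ᵥ x) = x ⬝ᵥ ((Cᵀ * B) *ᵥ y) := by
      intro x y; rw [dp_swap, transpose_mul, transpose_transpose, ← R3]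
    have hφ00 : φ 0 0 = 0 := by
      have h1 : (⟨0,0,0⟩ : ES1 p n) = 1 := rfl
      rw [hφ]
      simp only [h1, hσ1, ES1.one_z]
    set αh : (Fin n → ZMod p) →+ ZMod p :=
      AddMonoidHom.mk'
        (fun u => φ u 0 - (2 : ZMod p)⁻¹ * (u ⬝ᵥ ((Aᵀ * D) *ᵥ u)))
        (by
          intro a b
          have k := hkey a 0 b 0
          simp only [Matrix.mulVec_zero, add_zero, dotProduct_zero, zero_add, mul_zero] at k
          simp only [mulVec_add, dotProduct_add, add_dotProduct]
          linear_combination k + dpm A D a b - (2 : ZMod p)⁻¹ * hsymAD a b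
            - (a ⬝ᵥ ((Aᵀ * D) *ᵥ b)) * hinv2) with hαh
    set βh : (Fin n → ZMod p) →+ ZMod p :=
      AddMonoidHom.mk'
        (fun w => φ 0 w - (2 : ZMod p)⁻¹ * (w ⬝ᵥ ((Cᵀ * B) *ᵥ w)))
        (by
          intro a b
          have k := hkey 0 a 0 b
          simp only [Matrix.mulVec_zero, add_zero, dotProduct_zero, zero_add,
            zero_dotProduct, mul_zero] at k
          simp only [mulVec_add, dotProduct_add, add_dotProduct]
          linear_combination k + dpm C B a b - (2 : ZMod p)⁻¹ * hsymCB a b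
            - (a ⬝ᵥ ((Cᵀ * B) *ᵥ b)) * hinv2) with hβh
    refine ⟨A, B, C, D, l, αh.toZModLinearMap p, βh.toZModLinearMap p, ?_, hl, ?_, ?_⟩
    · rw [hMf]; exact hMunit
    · exact (symplectic_iff p A B C D l).2 ⟨R1, R3, R2⟩
    · intro x
      refine ES1.ext ?_ ?_ ?_
      · rw [hU x]; exact ((haction x.u x.w).1).symm
      · rw [hW x]; exact ((haction x.u x.w).2).symm
      · rw [hZ x]
        show φ x.u x.w + l * x.z = αh x.u + βh x.w + l * x.z + _ + _ + _
        simp only [hαh, hβh, AddMonoidHom.mk'_apply]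
        have k := r4v x.u x.w
        linear_combination k + dpm C D x.w x.u
  · rintro ⟨A, B, C, D, l, α, β, hM, hl, hs, hform⟩
    obtain ⟨R1, R3, R2⟩ := (symplectic_iff p A B C D l).1 hs
    have r1 : ∀ x y : Fin n → ZMod p,
        x ⬝ᵥ ((Aᵀ * D) *ᵥ y) = y ⬝ᵥ ((Aᵀ * D) *ᵥ x) := by
      intro x y; rw [dp_swap, transpose_mul, transpose_transpose, ← R1]
    have r3 : ∀ x y : Fin n → ZMod p,
        x ⬝ᵥ ((Cᵀ * B) *ᵥ y) = y ⬝ᵥ ((Cᵀ * B) *ᵥ x) := by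
      intro x y; rw [dp_swap, transpose_mul, transpose_transpose, ← R3]
    have r2 : ∀ x y : Fin n → ZMod p,
        x ⬝ᵥ ((Aᵀ * B) *ᵥ y) = x ⬝ᵥ ((Dᵀ * C) *ᵥ y) + l * (x ⬝ᵥ y) := by
      intro x y
      have hAB : Aᵀ * B = Dᵀ * C + l • 1 := by
        rw [← R2]; abel
      rw [hAB, add_mulVec, dotProduct_add, smul_mulVec, one_mulVec,
        dotProduct_smul, smul_eq_mul]
    have h2 : (2 : ZMod p) * (2 : ZMod p)⁻¹ = 1 := by
      apply mul_inv_cancel₀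
      have hp2 : p ≠ 2 := by rintro rfl; simp [Nat.odd_iff] at hodd
      intro h
      have : ((2 : ℕ) : ZMod p) = 0 := by exact_mod_cast h
      rw [ZMod.natCast_eq_zero_iff] at this
      exact hp2 ((Nat.prime_dvd_prime_iff_eq (Fact.out) Nat.prime_two).1 this)
    constructor
    · intro x y
      rw [hform x, hform y, hform (x * y)]
      ext
      · simp only [ES1.mul_u, ES1.mul_w, mulVec_add, Pi.add_apply]; ring
      · simp only [ES1.mul_u, ES1.mul_w, mulVec_add, Pi.add_apply]; ring
      · simp only [ES1.mul_u, ES1.mul_w, ES1.mul_z, mulVec_add, map_add,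
          dotProduct_add, add_dotProduct, dpm, mul_add]
        rw [r1 y.u x.u, r3 y.w x.w, r2 x.u y.w]
        have hswap : y.w ⬝ᵥ ((Cᵀ * D) *ᵥ x.u) = x.u ⬝ᵥ ((Dᵀ * C) *ᵥ y.w) := by
          rw [dp_swap, transpose_mul, transpose_transpose]
        linear_combination (x.u ⬝ᵥ ((Aᵀ * D) *ᵥ y.u) + x.w ⬝ᵥ ((Cᵀ * B) *ᵥ y.w)) * h2 + hswap
    · constructor
      · intro a b hab
        have hMinj := Matrix.mulVec_injective_iff_isUnit.2 hM
        have hu := congrArg ES1.u hab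
        have hw := congrArg ES1.w hab
        rw [hform a, hform b] at hu hw
        simp only at hu hw
        have hvec : (Matrix.fromBlocks A C D B) *ᵥ (Sum.elim a.u a.w)
            = (Matrix.fromBlocks A C D B) *ᵥ (Sum.elim b.u b.w) := by
          rw [fromBlocks_mulVec, fromBlocks_mulVec]
          simp only [Sum.elim_comp_inl, Sum.elim_comp_inr]
          rw [hu, hw]
        have := hMinj hvec
        have huu : a.u = b.u := funext fun i => congrFun this (Sum.inl i)
        have hww : a.w = b.w := funext fun i => congrFun this (Sum.inr i)
        have hz := congrArg ES1.z hab
        rw [hform a, hform b] at hz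
        simp only [huu, hww] at hz
        have hzz : a.z = b.z := by
          have : l * a.z = l * b.z := by linear_combination hz
          exact mul_left_cancel₀ hl this
        exact ES1.ext huu hww hzz
      · intro t
        obtain ⟨v, hv⟩ := (Matrix.mulVec_surjective_iff_isUnit.2 hM) (Sum.elim t.u t.w)
        rw [fromBlocks_mulVec] at hv
        set u := v ∘ Sum.inl with hu
        set w := v ∘ Sum.inr with hw
        have h1 : A *ᵥ u + C *ᵥ w = t.u := funext fun i => congrFun hv (Sum.inl i)
        have h2' : D *ᵥ u + B *ᵥ w = t.w := funext fun i => congrFun hv (Sum.inr i)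
        refine ⟨⟨u, w, l⁻¹ * (t.z - α u - β w
            - (2 : ZMod p)⁻¹ * (u ⬝ᵥ ((Aᵀ * D) *ᵥ u))
            - (2 : ZMod p)⁻¹ * (w ⬝ᵥ ((Cᵀ * B) *ᵥ w))
            - w ⬝ᵥ ((Cᵀ * D) *ᵥ u))⟩, ?_⟩
        rw [hform]
        ext
        · exact congrFun h1 _
        · exact congrFun h2' _
        · simp only
          rw [← mul_assoc, mul_inv_cancel₀ hl, one_mul]
          ring
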